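/- Let S : L²(I) → L²(I) be continuous, linear and injective, w_d, f ∈ L²(I), ν, η > 0, and U_ad a nonempty closed convex bounded subset of L²(I). Then the problem of minimizing J(u) = ½‖S(f+u) − w_d‖²_{L²} + (ν/2)‖u‖²_{L²} + (η/2)‖u‖_{L¹} over U_ad has a unique solution. -/

import Mathlib

open MeasureTheory Set Filter


section aux
variable {μ : Measure ℝ} [IsFiniteMeasure μ]

lemma phi_int (g : Lp ℝ 2 μ) : Integrable (fun x => |g x|) μ :=
  ((Lp.memLp g).integrable (by norm_num)).abs

lemma phi_nonneg (g : Lp ℝ 2 μ) : 0 ≤ ∫ x, |g x| ∂μ :=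
  integral_nonneg fun _ => abs_nonneg _

lemma phi_le (g : Lp ℝ 2 μ) : ∫ x, |g x| ∂μ ≤ (μ univ).toReal ^ ((1:ℝ)/2) * ‖g‖ := by
  have h1 : ∫ x, |g x| ∂μ = (eLpNorm (g : ℝ → ℝ) 1 μ).toReal := by
    rw [eLpNorm_one_eq_lintegral_enorm,
      show (fun x => |g x|) = fun x => ‖g x‖ from funext fun x => (Real.norm_eq_abs _).symm]
    exact integral_norm_eq_lintegral_enorm (Lp.aestronglyMeasurable g)
  have h2 : eLpNorm (g : ℝ → ℝ) 1 μ ≤ eLpNorm (g : ℝ → ℝ) 2 μ * μ univ ^ ((1:ℝ)/1 - 1/2) :=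
    eLpNorm_le_eLpNorm_mul_rpow_measure_univ (by norm_num) (Lp.aestronglyMeasurable g)
  have hfin : eLpNorm (g : ℝ → ℝ) 2 μ * μ univ ^ ((1:ℝ)/1 - 1/2) ≠ ⊤ :=
    ENNReal.mul_ne_top (Lp.eLpNorm_ne_top g)
      (ENNReal.rpow_ne_top_of_nonneg (by norm_num) (measure_ne_top μ _))
  rw [h1, Lp.norm_def]
  calc (eLpNorm (g : ℝ → ℝ) 1 μ).toReal
      ≤ (eLpNorm (g : ℝ → ℝ) 2 μ * μ univ ^ ((1:ℝ)/1 - 1/2)).toReal :=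
        ENNReal.toReal_mono hfin h2
    _ = (μ univ).toReal ^ ((1:ℝ)/2) * (eLpNorm (g : ℝ → ℝ) 2 μ).toReal := by
        rw [ENNReal.toReal_mul, ENNReal.toReal_rpow]; ring_nf

lemma phi_sub (g h : Lp ℝ 2 μ) :
    ∫ x, |g x| ∂μ ≤ (∫ x, |(g - h) x| ∂μ) + ∫ x, |h x| ∂μ := by
  rw [← integral_add (phi_int (g - h)) (phi_int h)]
  refine integral_mono_ae (phi_int g) ((phi_int (g-h)).add (phi_int h)) ?_
  filter_upwards [Lp.coeFn_sub g h] with x hx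
  simp only [hx, Pi.sub_apply]
  calc |g x| = |(g x - h x) + h x| := by ring_nf
    _ ≤ |g x - h x| + |h x| := abs_add_le _ _

lemma phi_mid (g h : Lp ℝ 2 μ) :
    ∫ x, |((2⁻¹:ℝ) • (g + h)) x| ∂μ
      ≤ 2⁻¹ * (∫ x, |g x| ∂μ) + 2⁻¹ * ∫ x, |h x| ∂μ := by
  rw [← integral_const_mul, ← integral_const_mul,
    ← integral_add ((phi_int g).const_mul _) ((phi_int h).const_mul _)]
  refine integral_mono_ae (phi_int _)
    (((phi_int g).const_mul _).add ((phi_int h).const_mul _)) ?_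
  filter_upwards [Lp.coeFn_smul (2⁻¹:ℝ) (g + h), Lp.coeFn_add g h] with x h1 h2
  simp only [h1, Pi.smul_apply, h2, Pi.add_apply, smul_eq_mul, abs_mul]
  rw [abs_of_pos (by norm_num : (0:ℝ) < 2⁻¹)]
  calc (2⁻¹:ℝ) * |g x + h x| ≤ 2⁻¹ * (|g x| + |h x|) := by
        gcongr; exact abs_add_le _ _
    _ = 2⁻¹ * |g x| + 2⁻¹ * |h x| := by ring

lemma mid_norm_sq {E : Type*} [NormedAddCommGroup E] [InnerProductSpace ℝ E] (a b : E) :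
    ‖(2⁻¹:ℝ) • (a + b)‖^2 = 2⁻¹*‖a‖^2 + 2⁻¹*‖b‖^2 - 4⁻¹*‖a-b‖^2 := by
  have hp := parallelogram_law_with_norm ℝ a b
  have hs : ‖(2⁻¹:ℝ) • (a + b)‖ = 2⁻¹ * ‖a + b‖ := by
    rw [norm_smul]; norm_num
  rw [hs]
  nlinarith [hp]
end aux


lemma exists_unique_min {E : Type*} [NormedAddCommGroup E] [InnerProductSpace ℝ E]
    [CompleteSpace E]
    (J : E → ℝ) (hJc : Continuous J) (hJ0 : ∀ u, 0 ≤ J u)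
    (ν : ℝ) (hν : 0 < ν)
    (key : ∀ u v : E, J ((2⁻¹:ℝ) • (u + v)) + (ν/8) * ‖u - v‖^2 ≤ 2⁻¹ * J u + 2⁻¹ * J v)
    (Uad : Set E) (hne : Uad.Nonempty) (hcl : IsClosed Uad) (hcv : Convex ℝ Uad) :
    ∃! u, u ∈ Uad ∧ ∀ v ∈ Uad, J u ≤ J v := by
  have hmem : ∀ u ∈ Uad, ∀ v ∈ Uad, (2⁻¹:ℝ) • (u + v) ∈ Uad := by
    intro u hu v hv
    rw [smul_add]
    exact hcv hu hv (by norm_num) (by norm_num) (by norm_num)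
  have hnei : (J '' Uad).Nonempty := hne.image J
  have hbdd : BddBelow (J '' Uad) := ⟨0, by rintro y ⟨u, -, rfl⟩; exact hJ0 u⟩
  set m := sInf (J '' Uad) with hm
  have hmle : ∀ u ∈ Uad, m ≤ J u := fun u hu => csInf_le hbdd (mem_image_of_mem J hu)
  -- minimizing sequence
  have hseq : ∀ n : ℕ, ∃ u ∈ Uad, J u < m + 1/(n+1) := by
    intro n
    obtain ⟨y, ⟨u, hu, rfl⟩, hy⟩ := exists_lt_of_csInf_lt hnei
      (show m < m + 1/(n+1) by nlinarith [one_div_pos.mpr (show (0:ℝ) < n+1 by positivity)])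
    exact ⟨u, hu, hy⟩
  choose u hu hJu using hseq
  -- the strong convexity bound on pairs
  have hdist : ∀ i j : ℕ, (ν/8) * ‖u i - u j‖^2 ≤ 2⁻¹ * (1/(i+1)) + 2⁻¹ * (1/(j+1)) := by
    intro i j
    have h1 := key (u i) (u j)
    have h2 := hmle _ (hmem _ (hu i) _ (hu j))
    have h3 := (hJu i).le
    have h4 := (hJu j).le
    nlinarith
  have hcauchy : CauchySeq u := by
    refine cauchySeq_of_le_tendsto_0 (fun N => Real.sqrt ((8/ν) * (1/(N+1)))) ?_ ?_
    · intro i j N hi hj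
      rw [dist_eq_norm]
      have hb : ‖u i - u j‖^2 ≤ (8/ν) * (1/(N+1)) := by
        have h1 := hdist i j
        have h2 : (1:ℝ)/(i+1) ≤ 1/(N+1) := by
          apply one_div_le_one_div_of_le (by positivity)
          exact_mod_cast by omega
        have h3 : (1:ℝ)/(j+1) ≤ 1/(N+1) := by
          apply one_div_le_one_div_of_le (by positivity)
          exact_mod_cast by omega
        rw [div_mul_eq_mul_div, le_div_iff₀ hν]
        nlinarith
      calc ‖u i - u j‖ = Real.sqrt (‖u i - u j‖^2) := (Real.sqrt_sq (norm_nonneg _)).symm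
        _ ≤ Real.sqrt ((8/ν) * (1/(N+1))) := Real.sqrt_le_sqrt hb
    · have h0 : Tendsto (fun N : ℕ => (8/ν) * (1/(N+1:ℝ))) atTop (nhds 0) := by
        have := tendsto_one_div_add_atTop_nhds_zero_nat (𝕜 := ℝ)
        simpa using this.const_mul (8/ν)
      simpa using h0.sqrt
  obtain ⟨w, hw⟩ := cauchySeq_tendsto_of_complete hcauchy
  have hwU : w ∈ Uad := hcl.mem_of_tendsto hw (Eventually.of_forall hu)
  have hJw : J w = m := by
    have h1 : Tendsto (fun n => J (u n)) atTop (nhds (J w)) :=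
      (hJc.tendsto w).comp hw
    have h2 : Tendsto (fun n => J (u n)) atTop (nhds m) := by
      refine tendsto_of_tendsto_of_tendsto_of_le_of_le (g := fun _ : ℕ => m)
        (h := fun n : ℕ => m + 1/(n+1)) tendsto_const_nhds ?_
        (fun n => hmle _ (hu n)) (fun n => (hJu n).le)
      have := tendsto_one_div_add_atTop_nhds_zero_nat (𝕜 := ℝ)
      simpa using tendsto_const_nhds.add this
    exact tendsto_nhds_unique h1 h2
  refine ⟨w, ⟨hwU, fun v hv => hJw ▸ hmle v hv⟩, ?_⟩
  rintro y ⟨hyU, hy⟩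
  have hJy : J y = m := le_antisymm (hy w hwU |>.trans_eq hJw) (hmle y hyU)
  have h1 := key y w
  have h2 := hmle _ (hmem _ hyU _ hwU)
  have : ‖y - w‖^2 ≤ 0 := by nlinarith
  have : y - w = 0 := by
    have := le_antisymm this (sq_nonneg _)
    simpa [pow_eq_zero_iff] using this
  linear_combination (norm := abel) this

/-- minimizing `J(u) = ½‖S(f+u) − w_d‖² + (ν/2)‖u‖² + (η/2)‖u‖_{L¹}` over a
nonempty closed convex bounded subset `U_ad` of `L²(I)` has a unique solution. -/
lemma J_unique_minimizer_aux {μ : Measure ℝ} [IsFiniteMeasure μ]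
    (S : Lp ℝ 2 μ →L[ℝ] Lp ℝ 2 μ)
    (w_d f : Lp ℝ 2 μ) (ν η : ℝ) (hν : 0 < ν) (hη : 0 < η)
    (Uad : Set (Lp ℝ 2 μ))
    (hne : Uad.Nonempty) (hcl : IsClosed Uad) (hcv : Convex ℝ Uad) :
    ∃! u, u ∈ Uad ∧ ∀ v ∈ Uad,
      (1/2) * ‖S (f + u) - w_d‖^2 + (ν/2) * ‖u‖^2 + (η/2) * ∫ x, |u x| ∂μ ≤
        (1/2) * ‖S (f + v) - w_d‖^2 + (ν/2) * ‖v‖^2 + (η/2) * ∫ x, |v x| ∂μ := by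
  set C : ℝ := (μ univ).toReal ^ ((1:ℝ)/2) with hC
  have hC0 : 0 ≤ C := Real.rpow_nonneg ENNReal.toReal_nonneg _
  set J : Lp ℝ 2 μ → ℝ := fun u =>
    (1/2) * ‖S (f + u) - w_d‖^2 + (ν/2) * ‖u‖^2 + (η/2) * ∫ x, |u x| ∂μ with hJ
  -- continuity of the L¹ term
  have hΦc : Continuous (fun g : Lp ℝ 2 μ => ∫ x, |g x| ∂μ) := by
    have : LipschitzWith (Real.toNNReal C) (fun g : Lp ℝ 2 μ => ∫ x, |g x| ∂μ) := by
      refine LipschitzWith.of_dist_le_mul fun g h => ?_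
      rw [Real.dist_eq, Real.coe_toNNReal _ hC0, dist_eq_norm]
      have h1 := phi_sub g h
      have h2 := phi_sub h g
      have h3 := phi_le (μ := μ) (g - h)
      have h4 := phi_le (μ := μ) (h - g)
      rw [norm_sub_rev h g] at h4
      rw [abs_le]
      constructor <;> rw [← hC] at * <;> linarith
    exact this.continuous
  have hJc : Continuous J := by
    have h1 : Continuous fun u : Lp ℝ 2 μ => ‖S (f + u) - w_d‖ :=
      ((S.continuous.comp (continuous_const.add continuous_id)).sub continuous_const).norm
    exact ((continuous_const.mul (h1.pow 2)).add
      (continuous_const.mul (continuous_norm.pow 2))).add (continuous_const.mul hΦc)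
  have hJ0 : ∀ u, 0 ≤ J u := by
    intro u
    have := phi_nonneg (μ := μ) u
    have := sq_nonneg ‖S (f + u) - w_d‖
    have := sq_nonneg ‖u‖
    simp only [hJ]
    positivity
  have hA : ∀ u v : Lp ℝ 2 μ, S (f + (2⁻¹:ℝ) • (u + v)) - w_d
      = (2⁻¹:ℝ) • ((S (f + u) - w_d) + (S (f + v) - w_d)) := by
    intro u v
    have h1 : f + (2⁻¹:ℝ) • (u + v) = (2⁻¹:ℝ) • ((f + u) + (f + v)) := by module
    rw [h1, S.map_smul, S.map_add]
    module
  have key : ∀ u v : Lp ℝ 2 μ,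
      J ((2⁻¹:ℝ) • (u + v)) + (ν/8) * ‖u - v‖^2 ≤ 2⁻¹ * J u + 2⁻¹ * J v := by
    intro u v
    have t1 : ‖S (f + (2⁻¹:ℝ) • (u + v)) - w_d‖^2
        ≤ 2⁻¹ * ‖S (f + u) - w_d‖^2 + 2⁻¹ * ‖S (f + v) - w_d‖^2 := by
      rw [hA u v, mid_norm_sq]
      nlinarith [sq_nonneg ‖(S (f + u) - w_d) - (S (f + v) - w_d)‖]
    have t2 := mid_norm_sq u v
    have t3 := phi_mid (μ := μ) u v
    simp only [hJ]
    have t3' : (η/2) * ∫ x, |((2⁻¹:ℝ) • (u + v)) x| ∂μ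
        ≤ (η/2) * (2⁻¹ * (∫ x, |u x| ∂μ) + 2⁻¹ * ∫ x, |v x| ∂μ) :=
      mul_le_mul_of_nonneg_left t3 (by positivity)
    nlinarith [hν.le]
  exact exists_unique_min J hJc hJ0 ν hν key Uad hne hcl hcv

theorem J_unique_minimizer
    (L : ℝ) (hL : 0 < L)
    (S : Lp ℝ 2 (volume.restrict (Ioo (0:ℝ) L)) →L[ℝ] Lp ℝ 2 (volume.restrict (Ioo (0:ℝ) L)))
    (hS : Function.Injective S)
    (w_d f : Lp ℝ 2 (volume.restrict (Ioo (0:ℝ) L)))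
    (ν η : ℝ) (hν : 0 < ν) (hη : 0 < η)
    (Uad : Set (Lp ℝ 2 (volume.restrict (Ioo (0:ℝ) L))))
    (hne : Uad.Nonempty) (hcl : IsClosed Uad) (hcv : Convex ℝ Uad)
    (hbd : Bornology.IsBounded Uad) :
    ∃! u, u ∈ Uad ∧ ∀ v ∈ Uad,
      (1/2) * ‖S (f + u) - w_d‖^2 + (ν/2) * ‖u‖^2
          + (η/2) * ∫ x, |u x| ∂(volume.restrict (Ioo (0:ℝ) L)) ≤
        (1/2) * ‖S (f + v) - w_d‖^2 + (ν/2) * ‖v‖^2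
          + (η/2) * ∫ x, |v x| ∂(volume.restrict (Ioo (0:ℝ) L)) := by
  haveI : IsFiniteMeasure (volume.restrict (Ioo (0:ℝ) L)) := by
    constructor
    rw [Measure.restrict_apply_univ, Real.volume_Ioo]
    exact ENNReal.ofReal_lt_top
  exact J_unique_minimizer_aux S w_d f ν η hν hη Uad hne hcl hcv
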